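/- Define T(h) = 4∫₀¹ dx/(√(1−x²)·√(1−(1−h²)x²)) for h ∈ (0,1). Then T is twice differentiable on (0,1) and there exists C > 0 such that h²·|T''(h)| ≤ C for all h ∈ (0,1). -/

import Mathlib

open Real Set MeasureTheory Metric

noncomputable def g0 (h x : ℝ) : ℝ :=
  1 / (Real.sqrt (1 - x ^ 2) * Real.sqrt (1 - (1 - h ^ 2) * x ^ 2))

noncomputable def g1 (h x : ℝ) : ℝ :=
  -(h * x ^ 2) / (Real.sqrt (1 - x ^ 2) * Real.sqrt (1 - (1 - h ^ 2) * x ^ 2) ^ 3)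

noncomputable def g2 (h x : ℝ) : ℝ :=
  -(x ^ 2) / (Real.sqrt (1 - x ^ 2) * Real.sqrt (1 - (1 - h ^ 2) * x ^ 2) ^ 3)
    + 3 * h ^ 2 * x ^ 4 / (Real.sqrt (1 - x ^ 2) * Real.sqrt (1 - (1 - h ^ 2) * x ^ 2) ^ 5)

lemma measurable_g0 (h : ℝ) : Measurable (g0 h) := by
  unfold g0; fun_prop

lemma measurable_g1 (h : ℝ) : Measurable (g1 h) := by
  unfold g1; fun_prop

lemma measurable_g2 (h : ℝ) : Measurable (g2 h) := by
  unfold g2; fun_prop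

lemma hasDerivAt_g0 {h x : ℝ} (hx : x ∈ Ioo (0:ℝ) 1) (hh : h ∈ Ioo (0:ℝ) 1) :
    HasDerivAt (fun y => g0 y x) (g1 h x) h := by
  obtain ⟨hx0, hx1⟩ := hx; obtain ⟨hh0, hh1⟩ := hh
  have hx2 : (0:ℝ) < 1 - x ^ 2 := by nlinarith
  have hD : (0:ℝ) < 1 - (1 - h ^ 2) * x ^ 2 := by nlinarith
  have hs0 : 0 < Real.sqrt (1 - x ^ 2) := Real.sqrt_pos.2 hx2
  have hτ0 : 0 < Real.sqrt (1 - (1 - h ^ 2) * x ^ 2) := Real.sqrt_pos.2 hD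
  have hu : HasDerivAt (fun y : ℝ => 1 - (1 - y ^ 2) * x ^ 2) (2 * h * x ^ 2) h := by
    have h1 : HasDerivAt (fun y : ℝ => y ^ 2) (2 * h) h := by simpa using hasDerivAt_pow 2 h
    have h2 := ((h1.const_sub 1).mul_const (x ^ 2)).const_sub 1
    exact h2.congr_deriv (by ring)
  have hsd : HasDerivAt (fun y : ℝ => Real.sqrt (1 - (1 - y ^ 2) * x ^ 2))
      (1 / (2 * Real.sqrt (1 - (1 - h ^ 2) * x ^ 2)) * (2 * h * x ^ 2)) h :=
    (Real.hasDerivAt_sqrt hD.ne').comp h hu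
  have hmul : HasDerivAt
      (fun y : ℝ => Real.sqrt (1 - x ^ 2) * Real.sqrt (1 - (1 - y ^ 2) * x ^ 2))
      (Real.sqrt (1 - x ^ 2) * (1 / (2 * Real.sqrt (1 - (1 - h ^ 2) * x ^ 2)) * (2 * h * x ^ 2)))
      h := hsd.const_mul _
  have key := hmul.fun_inv (by positivity)
  have hfun : (fun y => g0 y x) =
      fun y => (Real.sqrt (1 - x ^ 2) * Real.sqrt (1 - (1 - y ^ 2) * x ^ 2))⁻¹ := by
    funext y; simp [g0, one_div]
  rw [hfun]
  refine key.congr_deriv ?_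
  symm
  simp only [g1]
  field_simp

lemma hasDerivAt_g1 {h x : ℝ} (hx : x ∈ Ioo (0:ℝ) 1) (hh : h ∈ Ioo (0:ℝ) 1) :
    HasDerivAt (fun y => g1 y x) (g2 h x) h := by
  obtain ⟨hx0, hx1⟩ := hx; obtain ⟨hh0, hh1⟩ := hh
  have hx2 : (0:ℝ) < 1 - x ^ 2 := by nlinarith
  have hD : (0:ℝ) < 1 - (1 - h ^ 2) * x ^ 2 := by nlinarith
  have hs0 : 0 < Real.sqrt (1 - x ^ 2) := Real.sqrt_pos.2 hx2
  have hτ0 : 0 < Real.sqrt (1 - (1 - h ^ 2) * x ^ 2) := Real.sqrt_pos.2 hD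
  have hu : HasDerivAt (fun y : ℝ => 1 - (1 - y ^ 2) * x ^ 2) (2 * h * x ^ 2) h := by
    have h1 : HasDerivAt (fun y : ℝ => y ^ 2) (2 * h) h := by simpa using hasDerivAt_pow 2 h
    have h2 := ((h1.const_sub 1).mul_const (x ^ 2)).const_sub 1
    exact h2.congr_deriv (by ring)
  have hsd : HasDerivAt (fun y : ℝ => Real.sqrt (1 - (1 - y ^ 2) * x ^ 2))
      (1 / (2 * Real.sqrt (1 - (1 - h ^ 2) * x ^ 2)) * (2 * h * x ^ 2)) h :=
    (Real.hasDerivAt_sqrt hD.ne').comp h hu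
  have hcube := hsd.fun_pow 3
  have hmul := hcube.const_mul (Real.sqrt (1 - x ^ 2))
  have hinv := hmul.fun_inv (by positivity)
  have hp : HasDerivAt (fun y : ℝ => -(y * x ^ 2)) (-(x ^ 2)) h := by
    simpa using ((hasDerivAt_id h).mul_const (x ^ 2)).fun_neg
  have key := hp.fun_mul hinv
  have hfun : (fun y => g1 y x) =
      fun y => -(y * x ^ 2) *
        (Real.sqrt (1 - x ^ 2) * Real.sqrt (1 - (1 - y ^ 2) * x ^ 2) ^ 3)⁻¹ := by
    funext y; simp [g1, div_eq_mul_inv]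
  have hW2 : (Real.sqrt (1 - (1 - h ^ 2) * x ^ 2)) ^ 2 = 1 - (1 - h ^ 2) * x ^ 2 :=
    Real.sq_sqrt hD.le
  rw [hfun]
  refine key.congr_deriv ?_
  symm
  simp only [g2]
  push_cast
  have hVW : Real.sqrt (1 - x ^ 2 + x ^ 2 * h ^ 2) = Real.sqrt (1 - (1 - h ^ 2) * x ^ 2) := by
    rw [show (1:ℝ) - x ^ 2 + x ^ 2 * h ^ 2 = 1 - (1 - h ^ 2) * x ^ 2 from by ring]
  field_simp

lemma base_int : IntegrableOn (fun x : ℝ => (Real.sqrt (1 - x))⁻¹) (Ioo (0:ℝ) 1) := by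
  have h1 : IntervalIntegrable (fun u : ℝ => u ^ (-(1/2) : ℝ)) volume 0 1 :=
    intervalIntegral.intervalIntegrable_rpow' (by norm_num)
  have h2 : IntervalIntegrable (fun x : ℝ => (1 - x) ^ (-(1/2) : ℝ)) volume 0 1 := by
    have := (h1.comp_sub_left 1).symm
    simpa using this
  have h3 : IntegrableOn (fun x : ℝ => (1 - x) ^ (-(1/2) : ℝ)) (Ioo (0:ℝ) 1) := by
    rw [intervalIntegrable_iff, uIoc_of_le (by norm_num : (0:ℝ) ≤ 1)] at h2
    exact h2.mono_set Ioo_subset_Ioc_self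
  refine h3.congr_fun (fun x hx => ?_) measurableSet_Ioo
  have h0 : (0:ℝ) ≤ 1 - x := by linarith [hx.2]
  beta_reduce
  rw [Real.rpow_neg h0, Real.sqrt_eq_rpow]

lemma abs_g0_le {h x : ℝ} (hx : x ∈ Ioo (0:ℝ) 1) (hh : h ∈ Ioo (0:ℝ) 1) :
    |g0 h x| ≤ 1 / h * (Real.sqrt (1 - x))⁻¹ := by
  obtain ⟨hx0, hx1⟩ := hx; obtain ⟨hh0, hh1⟩ := hh
  have hx2 : (0:ℝ) < 1 - x ^ 2 := by nlinarith
  have hD : (0:ℝ) < 1 - (1 - h ^ 2) * x ^ 2 := by nlinarith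
  have ht0 : 0 < Real.sqrt (1 - x) := Real.sqrt_pos.2 (by linarith)
  have hts : Real.sqrt (1 - x) ≤ Real.sqrt (1 - x ^ 2) := Real.sqrt_le_sqrt (by nlinarith)
  have hhτ : h ≤ Real.sqrt (1 - (1 - h ^ 2) * x ^ 2) := by
    have : Real.sqrt (h ^ 2) ≤ Real.sqrt (1 - (1 - h ^ 2) * x ^ 2) :=
      Real.sqrt_le_sqrt (by nlinarith [mul_nonneg (by nlinarith : (0:ℝ) ≤ 1 - h ^ 2) hx2.le])
    rwa [Real.sqrt_sq hh0.le] at this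
  have hτ0 : 0 < Real.sqrt (1 - (1 - h ^ 2) * x ^ 2) := Real.sqrt_pos.2 hD
  have habs : |g0 h x| = g0 h x := abs_of_nonneg (by unfold g0; positivity)
  rw [habs]
  unfold g0
  have h1 : Real.sqrt (1 - x) * h ≤ Real.sqrt (1 - x ^ 2) * Real.sqrt (1 - (1 - h ^ 2) * x ^ 2) :=
    mul_le_mul hts hhτ hh0.le (Real.sqrt_nonneg _)
  calc 1 / (Real.sqrt (1 - x ^ 2) * Real.sqrt (1 - (1 - h ^ 2) * x ^ 2))
      ≤ 1 / (Real.sqrt (1 - x) * h) := by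
        apply div_le_div₀ (by norm_num) le_rfl (by positivity) h1
    _ = 1 / h * (Real.sqrt (1 - x))⁻¹ := by field_simp

lemma abs_g1_le {h x : ℝ} (hx : x ∈ Ioo (0:ℝ) 1) (hh : h ∈ Ioo (0:ℝ) 1) :
    |g1 h x| ≤ 1 / h ^ 2 * (Real.sqrt (1 - x))⁻¹ := by
  obtain ⟨hx0, hx1⟩ := hx; obtain ⟨hh0, hh1⟩ := hh
  have hx2 : (0:ℝ) < 1 - x ^ 2 := by nlinarith
  have hD : (0:ℝ) < 1 - (1 - h ^ 2) * x ^ 2 := by nlinarith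
  have ht0 : 0 < Real.sqrt (1 - x) := Real.sqrt_pos.2 (by linarith)
  have hts : Real.sqrt (1 - x) ≤ Real.sqrt (1 - x ^ 2) := Real.sqrt_le_sqrt (by nlinarith)
  have hhτ : h ≤ Real.sqrt (1 - (1 - h ^ 2) * x ^ 2) := by
    have : Real.sqrt (h ^ 2) ≤ Real.sqrt (1 - (1 - h ^ 2) * x ^ 2) :=
      Real.sqrt_le_sqrt (by nlinarith [mul_nonneg (by nlinarith : (0:ℝ) ≤ 1 - h ^ 2) hx2.le])
    rwa [Real.sqrt_sq hh0.le] at this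
  have hτ0 : 0 < Real.sqrt (1 - (1 - h ^ 2) * x ^ 2) := Real.sqrt_pos.2 hD
  have habs : |g1 h x| = h * x ^ 2 / (Real.sqrt (1 - x ^ 2) * Real.sqrt (1 - (1 - h ^ 2) * x ^ 2) ^ 3) := by
    unfold g1
    rw [abs_div, abs_neg, abs_of_nonneg (by positivity), abs_of_nonneg (by positivity)]
  rw [habs]
  have h1 : Real.sqrt (1 - x) * h ^ 3 ≤
      Real.sqrt (1 - x ^ 2) * Real.sqrt (1 - (1 - h ^ 2) * x ^ 2) ^ 3 := by
    gcongr <;> first | exact ht0.le | exact hh0.le | exact hts | exact hhτ | positivity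
  calc h * x ^ 2 / (Real.sqrt (1 - x ^ 2) * Real.sqrt (1 - (1 - h ^ 2) * x ^ 2) ^ 3)
      ≤ h * 1 / (Real.sqrt (1 - x) * h ^ 3) := by
        apply div_le_div₀ (by positivity) (by nlinarith) (by positivity) h1
    _ = 1 / h ^ 2 * (Real.sqrt (1 - x))⁻¹ := by field_simp

lemma abs_g2_le {h x : ℝ} (hx : x ∈ Ioo (0:ℝ) 1) (hh : h ∈ Ioo (0:ℝ) 1) :
    |g2 h x| ≤ 4 / h ^ 3 * (Real.sqrt (1 - x))⁻¹ := by
  obtain ⟨hx0, hx1⟩ := hx; obtain ⟨hh0, hh1⟩ := hh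
  have hx2 : (0:ℝ) < 1 - x ^ 2 := by nlinarith
  have hD : (0:ℝ) < 1 - (1 - h ^ 2) * x ^ 2 := by nlinarith
  have ht0 : 0 < Real.sqrt (1 - x) := Real.sqrt_pos.2 (by linarith)
  have hts : Real.sqrt (1 - x) ≤ Real.sqrt (1 - x ^ 2) := Real.sqrt_le_sqrt (by nlinarith)
  have hhτ : h ≤ Real.sqrt (1 - (1 - h ^ 2) * x ^ 2) := by
    have : Real.sqrt (h ^ 2) ≤ Real.sqrt (1 - (1 - h ^ 2) * x ^ 2) :=
      Real.sqrt_le_sqrt (by nlinarith [mul_nonneg (by nlinarith : (0:ℝ) ≤ 1 - h ^ 2) hx2.le])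
    rwa [Real.sqrt_sq hh0.le] at this
  have hτ0 : 0 < Real.sqrt (1 - (1 - h ^ 2) * x ^ 2) := Real.sqrt_pos.2 hD
  have hA : |(-(x ^ 2) / (Real.sqrt (1 - x ^ 2) * Real.sqrt (1 - (1 - h ^ 2) * x ^ 2) ^ 3))|
      ≤ 1 / h ^ 3 * (Real.sqrt (1 - x))⁻¹ := by
    rw [abs_div, abs_neg, abs_of_nonneg (by positivity : (0:ℝ) ≤ x ^ 2),
      abs_of_nonneg (by positivity)]
    have h1 : Real.sqrt (1 - x) * h ^ 3 ≤
        Real.sqrt (1 - x ^ 2) * Real.sqrt (1 - (1 - h ^ 2) * x ^ 2) ^ 3 := by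
      gcongr <;> first | exact ht0.le | exact hh0.le | exact hts | exact hhτ | positivity
    calc x ^ 2 / (Real.sqrt (1 - x ^ 2) * Real.sqrt (1 - (1 - h ^ 2) * x ^ 2) ^ 3)
        ≤ 1 / (Real.sqrt (1 - x) * h ^ 3) := by
          apply div_le_div₀ (by norm_num) (by nlinarith) (by positivity) h1
      _ = 1 / h ^ 3 * (Real.sqrt (1 - x))⁻¹ := by field_simp
  have hB : |3 * h ^ 2 * x ^ 4 / (Real.sqrt (1 - x ^ 2) * Real.sqrt (1 - (1 - h ^ 2) * x ^ 2) ^ 5)|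
      ≤ 3 / h ^ 3 * (Real.sqrt (1 - x))⁻¹ := by
    rw [abs_div, abs_of_nonneg (by positivity), abs_of_nonneg (by positivity)]
    have h1 : Real.sqrt (1 - x) * h ^ 5 ≤
        Real.sqrt (1 - x ^ 2) * Real.sqrt (1 - (1 - h ^ 2) * x ^ 2) ^ 5 := by
      gcongr <;> first | exact ht0.le | exact hh0.le | exact hts | exact hhτ | positivity
    calc 3 * h ^ 2 * x ^ 4 / (Real.sqrt (1 - x ^ 2) * Real.sqrt (1 - (1 - h ^ 2) * x ^ 2) ^ 5)
        ≤ 3 * h ^ 2 / (Real.sqrt (1 - x) * h ^ 5) := by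
          have hx4 : x ^ 4 ≤ 1 := by nlinarith [sq_nonneg (x ^ 2 - 1), sq_nonneg (x - 1)]
          apply div_le_div₀ (by positivity)
            (by nlinarith [mul_le_mul_of_nonneg_left hx4 (by positivity : (0:ℝ) ≤ 3 * h ^ 2)])
            (by positivity) h1
      _ = 3 / h ^ 3 * (Real.sqrt (1 - x))⁻¹ := by field_simp
  calc |g2 h x| ≤ |(-(x ^ 2) / (Real.sqrt (1 - x ^ 2) * Real.sqrt (1 - (1 - h ^ 2) * x ^ 2) ^ 3))|
        + |3 * h ^ 2 * x ^ 4 / (Real.sqrt (1 - x ^ 2) * Real.sqrt (1 - (1 - h ^ 2) * x ^ 2) ^ 5)| :=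
        abs_add_le _ _
    _ ≤ 1 / h ^ 3 * (Real.sqrt (1 - x))⁻¹ + 3 / h ^ 3 * (Real.sqrt (1 - x))⁻¹ := by
        exact add_le_add hA hB
    _ = 4 / h ^ 3 * (Real.sqrt (1 - x))⁻¹ := by ring

lemma abs_g2_le' {h x : ℝ} (hx : x ∈ Ioo (0:ℝ) 1) (hh : h ∈ Ioo (0:ℝ) 1)
    (hth : h ^ 2 ≤ 1 - x) : |g2 h x| ≤ 4 / (1 - x) ^ 2 := by
  obtain ⟨hx0, hx1⟩ := hx; obtain ⟨hh0, hh1⟩ := hh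
  have hx2 : (0:ℝ) < 1 - x ^ 2 := by nlinarith
  have hD : (0:ℝ) < 1 - (1 - h ^ 2) * x ^ 2 := by nlinarith
  have ht0 : 0 < Real.sqrt (1 - x) := Real.sqrt_pos.2 (by linarith)
  have ht2 : Real.sqrt (1 - x) ^ 2 = 1 - x := Real.sq_sqrt (by linarith)
  have hts : Real.sqrt (1 - x) ≤ Real.sqrt (1 - x ^ 2) := Real.sqrt_le_sqrt (by nlinarith)
  have htτ : Real.sqrt (1 - x) ≤ Real.sqrt (1 - (1 - h ^ 2) * x ^ 2) :=
    Real.sqrt_le_sqrt (by nlinarith)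
  have hτ0 : 0 < Real.sqrt (1 - (1 - h ^ 2) * x ^ 2) := Real.sqrt_pos.2 hD
  have hden3 : (1 - x) ^ 2 ≤ Real.sqrt (1 - x ^ 2) * Real.sqrt (1 - (1 - h ^ 2) * x ^ 2) ^ 3 := by
    calc (1 - x) ^ 2 = Real.sqrt (1 - x) * Real.sqrt (1 - x) ^ 3 := by
          rw [show ((1:ℝ)-x)^2 = ((Real.sqrt (1-x)) ^ 2) ^ 2 by rw [ht2]]; ring
      _ ≤ Real.sqrt (1 - x ^ 2) * Real.sqrt (1 - (1 - h ^ 2) * x ^ 2) ^ 3 := by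
          gcongr <;> first | exact ht0.le | exact hts | exact htτ | positivity
  have hden5 : (1 - x) ^ 3 ≤ Real.sqrt (1 - x ^ 2) * Real.sqrt (1 - (1 - h ^ 2) * x ^ 2) ^ 5 := by
    calc (1 - x) ^ 3 = Real.sqrt (1 - x) * Real.sqrt (1 - x) ^ 5 := by
          rw [show ((1:ℝ)-x)^3 = ((Real.sqrt (1-x)) ^ 2) ^ 3 by rw [ht2]]; ring
      _ ≤ Real.sqrt (1 - x ^ 2) * Real.sqrt (1 - (1 - h ^ 2) * x ^ 2) ^ 5 := by
          gcongr <;> first | exact ht0.le | exact hts | exact htτ | positivity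
  have hA : |(-(x ^ 2) / (Real.sqrt (1 - x ^ 2) * Real.sqrt (1 - (1 - h ^ 2) * x ^ 2) ^ 3))|
      ≤ 1 / (1 - x) ^ 2 := by
    rw [abs_div, abs_neg, abs_of_nonneg (by positivity : (0:ℝ) ≤ x ^ 2),
      abs_of_nonneg (by positivity)]
    apply div_le_div₀ (by norm_num) (by nlinarith) (pow_pos (by linarith) 2) hden3
  have hB : |3 * h ^ 2 * x ^ 4 / (Real.sqrt (1 - x ^ 2) * Real.sqrt (1 - (1 - h ^ 2) * x ^ 2) ^ 5)|
      ≤ 3 / (1 - x) ^ 2 := by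
    rw [abs_div, abs_of_nonneg (by positivity), abs_of_nonneg (by positivity)]
    calc 3 * h ^ 2 * x ^ 4 / (Real.sqrt (1 - x ^ 2) * Real.sqrt (1 - (1 - h ^ 2) * x ^ 2) ^ 5)
        ≤ 3 * (1 - x) * 1 / (1 - x) ^ 3 := by
          have hx4 : x ^ 4 ≤ 1 := by nlinarith [sq_nonneg (x ^ 2 - 1), sq_nonneg (x - 1)]
          apply div_le_div₀ (by nlinarith) (by nlinarith) (pow_pos (by linarith) 3) hden5
      _ ≤ 3 / (1 - x) ^ 2 := by
          rw [div_le_div_iff₀ (pow_pos (by linarith) 3) (pow_pos (by linarith) 2)]; nlinarith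
  calc |g2 h x| ≤ |(-(x ^ 2) / (Real.sqrt (1 - x ^ 2) * Real.sqrt (1 - (1 - h ^ 2) * x ^ 2) ^ 3))|
        + |3 * h ^ 2 * x ^ 4 / (Real.sqrt (1 - x ^ 2) * Real.sqrt (1 - (1 - h ^ 2) * x ^ 2) ^ 5)| :=
        abs_add_le _ _
    _ ≤ 1 / (1 - x) ^ 2 + 3 / (1 - x) ^ 2 := add_le_add hA hB
    _ = 4 / (1 - x) ^ 2 := by ring

lemma ball_lem {h₀ : ℝ} (h0 : 0 < h₀) (h1 : h₀ < 1) :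
    ∀ h ∈ ball h₀ (min h₀ (1 - h₀) / 2), h ∈ Ioo (0:ℝ) 1 ∧ h₀ / 2 ≤ h := by
  intro h hb
  rw [mem_ball, Real.dist_eq, abs_lt] at hb
  have l1 := min_le_left h₀ (1 - h₀)
  have l2 := min_le_right h₀ (1 - h₀)
  exact ⟨⟨by linarith [hb.1], by linarith [hb.2]⟩, by linarith [hb.1]⟩

lemma key1 {h₀ : ℝ} (hh₀ : h₀ ∈ Ioo (0:ℝ) 1) :
    Integrable (g1 h₀) (volume.restrict (Ioo (0:ℝ) 1)) ∧
      HasDerivAt (fun h => ∫ x in Ioo (0:ℝ) 1, g0 h x) (∫ x in Ioo (0:ℝ) 1, g1 h₀ x) h₀ := by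
  obtain ⟨h0, h1⟩ := hh₀
  have hmem : h₀ ∈ Ioo (0:ℝ) 1 := ⟨h0, h1⟩
  have hε0 : 0 < min h₀ (1 - h₀) / 2 := by
    have : 0 < min h₀ (1 - h₀) := lt_min h0 (by linarith)
    linarith
  have hball := ball_lem h0 h1
  have h2pos : (0:ℝ) < h₀ / 2 := by linarith
  refine hasDerivAt_integral_of_dominated_loc_of_deriv_le
    (bound := fun x => 1 / (h₀ / 2) ^ 2 * (Real.sqrt (1 - x))⁻¹) (ball_mem_nhds h₀ hε0) ?_ ?_ ?_ ?_ ?_ ?_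
  · exact Filter.Eventually.of_forall fun h => (measurable_g0 h).aestronglyMeasurable
  · refine Integrable.mono (base_int.const_mul (1 / h₀)) (measurable_g0 h₀).aestronglyMeasurable ?_
    rw [ae_restrict_iff' measurableSet_Ioo]
    refine ae_of_all _ fun x hx => ?_
    rw [Real.norm_eq_abs, Real.norm_eq_abs,
      abs_of_nonneg (mul_nonneg (one_div_nonneg.2 h0.le) (inv_nonneg.2 (Real.sqrt_nonneg _)))]
    exact abs_g0_le hx hmem
  · exact (measurable_g1 h₀).aestronglyMeasurable
  · rw [ae_restrict_iff' measurableSet_Ioo]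
    refine ae_of_all _ fun x hx h hb => ?_
    obtain ⟨hIoo, hge⟩ := hball h hb
    rw [Real.norm_eq_abs]
    refine (abs_g1_le hx hIoo).trans ?_
    refine mul_le_mul_of_nonneg_right ?_ (inv_nonneg.2 (Real.sqrt_nonneg _))
    exact one_div_le_one_div_of_le (pow_pos h2pos 2) (pow_le_pow_left₀ h2pos.le hge 2)
  · exact base_int.const_mul _
  · rw [ae_restrict_iff' measurableSet_Ioo]
    exact ae_of_all _ fun x hx h hb => hasDerivAt_g0 hx (hball h hb).1

lemma key2 {h₀ : ℝ} (hh₀ : h₀ ∈ Ioo (0:ℝ) 1) :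
    Integrable (g2 h₀) (volume.restrict (Ioo (0:ℝ) 1)) ∧
      HasDerivAt (fun h => ∫ x in Ioo (0:ℝ) 1, g1 h x) (∫ x in Ioo (0:ℝ) 1, g2 h₀ x) h₀ := by
  obtain ⟨h0, h1⟩ := hh₀
  have hmem : h₀ ∈ Ioo (0:ℝ) 1 := ⟨h0, h1⟩
  have hε0 : 0 < min h₀ (1 - h₀) / 2 := by
    have : 0 < min h₀ (1 - h₀) := lt_min h0 (by linarith)
    linarith
  have hball := ball_lem h0 h1
  have h2pos : (0:ℝ) < h₀ / 2 := by linarith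
  refine hasDerivAt_integral_of_dominated_loc_of_deriv_le
    (bound := fun x => 4 / (h₀ / 2) ^ 3 * (Real.sqrt (1 - x))⁻¹) (ball_mem_nhds h₀ hε0) ?_ ?_ ?_ ?_ ?_ ?_
  · exact Filter.Eventually.of_forall fun h => (measurable_g1 h).aestronglyMeasurable
  · exact (key1 hmem).1
  · exact (measurable_g2 h₀).aestronglyMeasurable
  · rw [ae_restrict_iff' measurableSet_Ioo]
    refine ae_of_all _ fun x hx h hb => ?_
    obtain ⟨hIoo, hge⟩ := hball h hb
    rw [Real.norm_eq_abs]
    refine (abs_g2_le hx hIoo).trans ?_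
    refine mul_le_mul_of_nonneg_right ?_ (inv_nonneg.2 (Real.sqrt_nonneg _))
    exact div_le_div_of_nonneg_left (by norm_num) (pow_pos h2pos 3) (pow_le_pow_left₀ h2pos.le hge 3)
  · exact base_int.const_mul _
  · rw [ae_restrict_iff' measurableSet_Ioo]
    exact ae_of_all _ fun x hx h hb => hasDerivAt_g1 hx (hball h hb).1

lemma int_g2_bound {h : ℝ} (hh : h ∈ Ioo (0:ℝ) 1) :
    |∫ x in Ioo (0:ℝ) 1, g2 h x| ≤ 12 / h ^ 2 := by
  obtain ⟨h0, h1⟩ := hh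
  have hb2 : (0:ℝ) < 1 - h ^ 2 := by nlinarith
  have hint : IntegrableOn (g2 h) (Ioo (0:ℝ) 1) := (key2 ⟨h0, h1⟩).1
  have habs : IntegrableOn (fun x => |g2 h x|) (Ioo (0:ℝ) 1) := hint.abs
  have hsub1 : Ioo (0:ℝ) (1 - h ^ 2) ⊆ Ioo (0:ℝ) 1 := Ioo_subset_Ioo le_rfl (by nlinarith [sq_nonneg h])
  have hsub2 : Ico (1 - h ^ 2) 1 ⊆ Ioo (0:ℝ) 1 := fun x hx => ⟨lt_of_lt_of_le hb2 hx.1, hx.2⟩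
  have hunion : Ioo (0:ℝ) 1 = Ioo 0 (1 - h ^ 2) ∪ Ico (1 - h ^ 2) 1 :=
    (Ioo_union_Ico_eq_Ioo hb2 (by nlinarith [sq_nonneg h])).symm
  have hdisj : Disjoint (Ioo (0:ℝ) (1 - h ^ 2)) (Ico (1 - h ^ 2) 1) := by
    apply Set.disjoint_left.2
    intro x hx1 hx2
    exact absurd hx2.1 (not_le.2 hx1.2)
  -- piece 1
  have hcont1 : ContinuousOn (fun x : ℝ => 4 / (1 - x) ^ 2) (Icc (0:ℝ) (1 - h ^ 2)) := by
    intro x hx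
    apply ContinuousAt.continuousWithinAt
    have hne : ((1:ℝ) - x) ^ 2 ≠ 0 := by
      have hx2' := hx.2
      have : (0:ℝ) < 1 - x := by nlinarith [pow_pos h0 2]
      positivity
    exact ContinuousAt.div continuousAt_const (by fun_prop) hne
  have hint1 : IntegrableOn (fun x : ℝ => 4 / (1 - x) ^ 2) (Ioo (0:ℝ) (1 - h ^ 2)) :=
    (hcont1.integrableOn_Icc).mono_set Ioo_subset_Icc_self
  have hp1 : ∫ x in Ioo (0:ℝ) (1 - h ^ 2), |g2 h x| ≤ 4 / h ^ 2 := by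
    have hb : ∫ x in Ioo (0:ℝ) (1 - h ^ 2), |g2 h x|
        ≤ ∫ x in Ioo (0:ℝ) (1 - h ^ 2), 4 / (1 - x) ^ 2 := by
      refine setIntegral_mono_on (habs.mono_set hsub1) hint1 measurableSet_Ioo fun x hx => ?_
      exact abs_g2_le' (hsub1 hx) ⟨h0, h1⟩ (by linarith [hx.2])
    refine hb.trans ?_
    have hFTC : ∫ x in (0:ℝ)..(1 - h ^ 2), 4 / (1 - x) ^ 2
        = 4 * (1 - (1 - h ^ 2))⁻¹ - 4 * ((1:ℝ) - 0)⁻¹ := by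
      refine intervalIntegral.integral_eq_sub_of_hasDerivAt
        (f := fun y : ℝ => 4 * (1 - y)⁻¹) (fun x hx => ?_)
        ((hcont1.mono (le_of_eq (uIcc_of_le hb2.le))).intervalIntegrable)
      rw [uIcc_of_le hb2.le] at hx
      have hne : (1:ℝ) - x ≠ 0 := by
        have hx2' := hx.2
        have : (0:ℝ) < 1 - x := by nlinarith [pow_pos h0 2]
        exact this.ne'
      have hd := (((hasDerivAt_id x).const_sub 1).inv hne).const_mul (4:ℝ)
      refine hd.congr_deriv ?_
      simp only [id, neg_neg]; ring
    calc ∫ x in Ioo (0:ℝ) (1 - h ^ 2), 4 / (1 - x) ^ 2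
        = ∫ x in (0:ℝ)..(1 - h ^ 2), 4 / (1 - x) ^ 2 := by
          rw [intervalIntegral.integral_of_le hb2.le, integral_Ioc_eq_integral_Ioo]
      _ = 4 * (1 - (1 - h ^ 2))⁻¹ - 4 * ((1:ℝ) - 0)⁻¹ := hFTC
      _ ≤ 4 / h ^ 2 := by
          rw [show (1:ℝ) - (1 - h ^ 2) = h ^ 2 by ring, div_eq_mul_inv]
          norm_num
  -- piece 2
  have hIco : ∫ x in Ico (1 - h ^ 2) 1, (Real.sqrt (1 - x))⁻¹ = 2 * h := by
    rw [integral_Ico_eq_integral_Ioo, ← integral_Ioc_eq_integral_Ioo,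
      ← intervalIntegral.integral_of_le (by nlinarith [sq_nonneg h] : 1 - h ^ 2 ≤ 1)]
    rw [show (∫ x in (1 - h ^ 2 : ℝ)..1, (Real.sqrt (1 - x))⁻¹)
        = ∫ x in ((1:ℝ) - 1)..((1:ℝ) - (1 - h ^ 2)), (Real.sqrt x)⁻¹ from
      intervalIntegral.integral_comp_sub_left (fun u : ℝ => (Real.sqrt u)⁻¹) 1]
    rw [show (1:ℝ) - 1 = 0 by norm_num, show (1:ℝ) - (1 - h ^ 2) = h ^ 2 by ring]
    have heq : EqOn (fun u : ℝ => (Real.sqrt u)⁻¹) (fun u : ℝ => u ^ (-(1/2) : ℝ))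
        (uIcc (0:ℝ) (h ^ 2)) := by
      intro u hu
      rw [uIcc_of_le (by positivity)] at hu
      simp only
      rw [Real.sqrt_eq_rpow, ← Real.rpow_neg hu.1]
    rw [intervalIntegral.integral_congr heq, integral_rpow (Or.inl (by norm_num))]
    rw [show (-(1/2) : ℝ) + 1 = 1/2 by norm_num]
    rw [Real.zero_rpow (by norm_num : (1/2 : ℝ) ≠ 0), ← Real.sqrt_eq_rpow,
      Real.sqrt_sq h0.le]
    ring
  have hp2 : ∫ x in Ico (1 - h ^ 2) 1, |g2 h x| ≤ 8 / h ^ 2 := by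
    have hbnd : ∫ x in Ico (1 - h ^ 2) 1, |g2 h x|
        ≤ ∫ x in Ico (1 - h ^ 2) 1, 4 / h ^ 3 * (Real.sqrt (1 - x))⁻¹ := by
      have hbint : IntegrableOn (fun x : ℝ => 4 / h ^ 3 * (Real.sqrt (1 - x))⁻¹)
          (Ioo (0:ℝ) 1) := base_int.const_mul _
      refine setIntegral_mono_on (habs.mono_set hsub2)
        (hbint.mono_set hsub2) measurableSet_Ico fun x hx => ?_
      exact abs_g2_le (hsub2 hx) ⟨h0, h1⟩
    refine hbnd.trans ?_
    rw [integral_const_mul, hIco]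
    refine le_of_eq ?_
    field_simp
    ring
  have habs_int : |∫ x in Ioo (0:ℝ) 1, g2 h x| ≤ ∫ x in Ioo (0:ℝ) 1, |g2 h x| := by
    have := norm_integral_le_integral_norm (μ := volume.restrict (Ioo (0:ℝ) 1)) (g2 h)
    simpa [Real.norm_eq_abs] using this
  have hsplit : (∫ x in Ioo (0:ℝ) 1, |g2 h x|)
      = (∫ x in Ioo (0:ℝ) (1 - h ^ 2), |g2 h x|) + ∫ x in Ico (1 - h ^ 2) 1, |g2 h x| := by
    rw [hunion]
    exact setIntegral_union hdisj measurableSet_Ico (habs.mono_set hsub1) (habs.mono_set hsub2)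
  calc |∫ x in Ioo (0:ℝ) 1, g2 h x| ≤ ∫ x in Ioo (0:ℝ) 1, |g2 h x| := habs_int
    _ = _ := hsplit
    _ ≤ 4 / h ^ 2 + 8 / h ^ 2 := add_le_add hp1 hp2
    _ = 12 / h ^ 2 := by ring

theorem stmt_4
    (T : ℝ → ℝ)
    (hT : ∀ h ∈ Ioo (0:ℝ) 1, T h =
      4 * ∫ x in Ioo (0:ℝ) 1, 1 / (Real.sqrt (1 - x ^ 2) * Real.sqrt (1 - (1 - h ^ 2) * x ^ 2))) :
    (∀ h ∈ Ioo (0:ℝ) 1, DifferentiableAt ℝ T h ∧ DifferentiableAt ℝ (deriv T) h) ∧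
    ∃ C : ℝ, 0 < C ∧ ∀ h ∈ Ioo (0:ℝ) 1, h ^ 2 * |deriv (deriv T) h| ≤ C := by
  have main : ∀ h₀ ∈ Ioo (0:ℝ) 1, HasDerivAt T (4 * ∫ x in Ioo (0:ℝ) 1, g1 h₀ x) h₀ := by
    intro h₀ hh₀
    have e1 : T =ᶠ[nhds h₀] fun h => 4 * ∫ x in Ioo (0:ℝ) 1, g0 h x :=
      Filter.eventuallyEq_of_mem (isOpen_Ioo.mem_nhds hh₀) fun h hh => hT h hh
    exact (((key1 hh₀).2.const_mul 4).congr_of_eventuallyEq e1)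
  have hderivT : ∀ h₀ ∈ Ioo (0:ℝ) 1, deriv T h₀ = 4 * ∫ x in Ioo (0:ℝ) 1, g1 h₀ x :=
    fun h₀ hh₀ => (main h₀ hh₀).deriv
  have main2 : ∀ h₀ ∈ Ioo (0:ℝ) 1,
      HasDerivAt (deriv T) (4 * ∫ x in Ioo (0:ℝ) 1, g2 h₀ x) h₀ := by
    intro h₀ hh₀
    have e2 : deriv T =ᶠ[nhds h₀] fun h => 4 * ∫ x in Ioo (0:ℝ) 1, g1 h x :=
      Filter.eventuallyEq_of_mem (isOpen_Ioo.mem_nhds hh₀) hderivT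
    exact (((key2 hh₀).2.const_mul 4).congr_of_eventuallyEq e2)
  refine ⟨fun h hh => ⟨(main h hh).differentiableAt, (main2 h hh).differentiableAt⟩,
    48, by norm_num, ?_⟩
  intro h hh
  rw [(main2 h hh).deriv]
  have h0 := hh.1
  calc h ^ 2 * |4 * ∫ x in Ioo (0:ℝ) 1, g2 h x|
      = 4 * (h ^ 2 * |∫ x in Ioo (0:ℝ) 1, g2 h x|) := by
        rw [abs_mul, abs_of_nonneg (by norm_num : (0:ℝ) ≤ 4)]; ring
    _ ≤ 4 * (h ^ 2 * (12 / h ^ 2)) := by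
        have := int_g2_bound hh
        gcongr
    _ = 48 := by
        have hne : h ≠ 0 := ne_of_gt h0
        field_simp
        norm_num
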